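/- arXiv:2209.05392 — 5 statements merged into one kernel-verified Lean document; each statement's English description precedes it below -/
import Mathlib

section
/- Let G be the group presented by three generators a, b, c subject to the two relations c·b·a = a·c·b and a·c·b = b·a·c. Then the elements a and b do not commute in G. -/
/-- The relations `cba = acb` and `acb = bac` for the group
`⟨a, b, c | cba = acb = bac⟩`, written as elements of the free group on three
generators (with `a`, `b`, `c` the generators indexed by `0`, `1`, `2`). -/
def rank2Rels : Set (FreeGroup (Fin 3)) :=
  { FreeGroup.of 2 * FreeGroup.of 1 * FreeGroup.of 0 *
      (FreeGroup.of 0 * FreeGroup.of 2 * FreeGroup.of 1)⁻¹,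
    FreeGroup.of 0 * FreeGroup.of 2 * FreeGroup.of 1 *
      (FreeGroup.of 1 * FreeGroup.of 0 * FreeGroup.of 2)⁻¹ }

private def fPerm : Fin 3 → Equiv.Perm (Fin 3) :=
  ![Equiv.swap 1 2, Equiv.swap 0 1, Equiv.swap 0 2 * Equiv.swap 2 1]

private lemma fPerm_rels : ∀ r ∈ rank2Rels, FreeGroup.lift fPerm r = 1 := by
  intro r hr
  rcases hr with h | h <;> subst h <;>
    simp only [map_mul, map_inv, FreeGroup.lift_apply_of] <;> decide

/-- in `G = ⟨a, b, c | cba = acb = bac⟩`, the elements `a` and `b`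
do not commute. -/
theorem a_b_not_commute :
    ¬ (PresentedGroup.of (rels := rank2Rels) 0 * PresentedGroup.of 1
        = PresentedGroup.of 1 * PresentedGroup.of 0) := by
  intro h
  have := congrArg (PresentedGroup.toGroup fPerm_rels) h
  simp only [map_mul, PresentedGroup.toGroup.of] at this
  revert this
  decide
end

section
/- Let (W, S) be a Coxeter system, and let B⁺(W) be the positive braid monoid: the monoid presented by generators {𝐬 : s ∈ S} and relations identifying, for each pair s, s' ∈ S with m(s, s') finite, the alternating word 𝐬 𝐬' 𝐬 ⋯ of length m(s,s') with the alternating word 𝐬' 𝐬 𝐬' ⋯ of length m(s,s'). If two words (s_1, ..., s_r) and (s'_1, ..., s'_r) in S represent the same element of B⁺(W), then the multisets {s_1 ⋯ s_{k-1} s_k s_{k-1} ⋯ s_1 : 1 ≤ k ≤ r} and {s'_1 ⋯ s'_{k-1} s'_k s'_{k-1} ⋯ s'_1 : 1 ≤ k ≤ r} of elements of W are equal. In particular, the left inversion multiset Inv(𝐰) of a positive braid 𝐰 ∈ B⁺(W) is well-defined. -/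
open CoxeterSystem

/-- The defining relation of the positive braid monoid of a Coxeter matrix `M`:
for `i, j` with `m(i,j)` finite (nonzero in Mathlib's convention), the two
alternating words of length `m(i,j)` are identified.  The braid monoid is the
quotient of the free monoid by the congruence generated by this relation. -/
def braidRel {B : Type*} (M : CoxeterMatrix B) : FreeMonoid B → FreeMonoid B → Prop :=
  fun a b => ∃ i j : B, M i j ≠ 0 ∧
    a = FreeMonoid.ofList (alternatingWord i j (M i j)) ∧
    b = FreeMonoid.ofList (alternatingWord j i (M i j))

section Aux

variable {B W : Type*} [Group W] {M : CoxeterMatrix B} (cs : CoxeterSystem M W)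

lemma lis_cons (i : B) (l : List B) :
    cs.leftInvSeq (i :: l) = cs.simple i :: (cs.leftInvSeq l).map ⇑(MulAut.conj (cs.simple i)) :=
  rfl

lemma lis_append (a b : List B) :
    cs.leftInvSeq (a ++ b) =
      cs.leftInvSeq a ++ (cs.leftInvSeq b).map ⇑(MulAut.conj (cs.wordProd a)) := by
  induction a with
  | nil => simp
  | cons i a ih =>
      rw [List.cons_append, lis_cons, lis_cons, ih, List.map_append, List.map_map,
        cs.wordProd_cons, map_mul, MulAut.coe_mul, List.cons_append]

/-- core group identity -/
lemma core_identity {a b : W} (ha : a * a = 1) (hb : b * b = 1) {m k n : ℕ}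
    (h : (a * b) ^ m = 1) (hkn : k + n + 1 = m) :
    a * (b * a) ^ k = b * (a * b) ^ n := by
  have hbinv : b⁻¹ = b := inv_eq_of_mul_eq_one_left hb
  have hainv : a⁻¹ = a := inv_eq_of_mul_eq_one_left ha
  have hinv : (a * b)⁻¹ = b * a := by rw [mul_inv_rev, hbinv, hainv]
  have hmk : (a * b) ^ (k + n) = (a * b)⁻¹ := by
    rw [← hkn, pow_succ] at h
    exact eq_inv_of_mul_eq_one_left h
  rw [← hinv, inv_pow, mul_inv_eq_iff_eq_mul, mul_assoc, ← pow_add, Nat.add_comm n k, hmk,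
    hinv, ← mul_assoc, hb, one_mul]

lemma lis_alternating (m : ℕ) (i j : B) :
    cs.leftInvSeq (alternatingWord i j m) =
      (List.range m).map (fun k =>
        if Even m then cs.simple i * (cs.simple j * cs.simple i) ^ k
        else cs.simple j * (cs.simple i * cs.simple j) ^ k) := by
  induction m generalizing i j with
  | zero => rfl
  | succ m ih =>
      rw [CoxeterSystem.alternatingWord_succ', List.range_succ_eq_map]
      by_cases hm : Even m
      · have hm1 : ¬ Even (m + 1) := by simp [Nat.even_add_one, hm]
        rw [if_pos hm, lis_cons, ih, List.map_map, List.map_cons, List.map_map]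
        simp only [if_pos hm, if_neg hm1, Function.comp_def, pow_zero, mul_one]
        refine congrArg₂ _ rfl (List.map_congr_left fun k _ => ?_)
        simp only [MulAut.conj_apply, cs.inv_simple, Nat.succ_eq_add_one]
        group
        exact (SemiconjBy.zpow_right ((mul_assoc (cs.simple j) (cs.simple i) (cs.simple j)).symm)
          (1 + (k : ℤ))).symm
      · have hm1 : Even (m + 1) := Nat.even_add_one.2 hm
        rw [if_neg hm, lis_cons, ih, List.map_map, List.map_cons, List.map_map]
        simp only [if_neg hm, if_pos hm1, Function.comp_def, pow_zero, mul_one]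
        refine congrArg₂ _ rfl (List.map_congr_left fun k _ => ?_)
        simp only [MulAut.conj_apply, cs.inv_simple, Nat.succ_eq_add_one]
        group
        exact (SemiconjBy.zpow_right ((mul_assoc (cs.simple i) (cs.simple j) (cs.simple i)).symm)
          (1 + (k : ℤ))).symm

lemma lis_alternating_multiset (m : ℕ) (i j : B) (h : (cs.simple i * cs.simple j) ^ m = 1)
    (h' : (cs.simple j * cs.simple i) ^ m = 1) :
    (cs.leftInvSeq (alternatingWord i j m) : Multiset W) =
      (cs.leftInvSeq (alternatingWord j i m) : Multiset W) := by
  rw [lis_alternating, lis_alternating]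
  set f : ℕ → W := fun k =>
    if Even m then cs.simple i * (cs.simple j * cs.simple i) ^ k
    else cs.simple j * (cs.simple i * cs.simple j) ^ k with hf
  set g : ℕ → W := fun k =>
    if Even m then cs.simple j * (cs.simple i * cs.simple j) ^ k
    else cs.simple i * (cs.simple j * cs.simple i) ^ k with hg
  have key : List.map f (List.range m) = (List.map g (List.range m)).reverse := by
    rw [← List.map_reverse, List.range_eq_range', List.reverse_range', ← List.range_eq_range',
      List.map_map]
    apply List.map_congr_left
    intro k hk
    rw [List.mem_range] at hk
    simp only [Function.comp_apply, hf, hg, Nat.zero_add]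
    have hkn : k + (m - 1 - k) + 1 = m := by omega
    by_cases hm : Even m
    · rw [if_pos hm, if_pos hm]
      exact core_identity (cs.simple_mul_simple_self i) (cs.simple_mul_simple_self j) h hkn
    · rw [if_neg hm, if_neg hm]
      exact core_identity (cs.simple_mul_simple_self j) (cs.simple_mul_simple_self i) h' hkn
  rw [key]
  exact Multiset.coe_reverse _

end Aux

/-- if two words over `S` represent the same element of the
positive braid monoid `B⁺(W)`, then their left inversion multisets (computed in
`W`) coincide.  In particular the left inversion multiset of a positive braid
is well-defined. -/
theorem leftInvSeq_multiset_well_defined {B W : Type*} [Group W] {M : CoxeterMatrix B}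
    (cs : CoxeterSystem M W) (l l' : List B)
    (h : conGen (braidRel M) (FreeMonoid.ofList l) (FreeMonoid.ofList l')) :
    (cs.leftInvSeq l : Multiset W) = (cs.leftInvSeq l' : Multiset W) := by
  suffices H : ∀ a b : FreeMonoid B, ConGen.Rel (braidRel M) a b →
      cs.wordProd (FreeMonoid.toList a) = cs.wordProd (FreeMonoid.toList b) ∧
      (cs.leftInvSeq (FreeMonoid.toList a) : Multiset W) =
        (cs.leftInvSeq (FreeMonoid.toList b) : Multiset W) by
    exact (H _ _ h).2
  intro a b hab
  induction hab with
  | of a b hab =>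
      obtain ⟨i, j, hij, rfl, rfl⟩ := hab
      constructor
      · have := cs.wordProd_braidWord_eq i j
        rwa [CoxeterSystem.braidWord, CoxeterSystem.braidWord, M.symmetric j i] at this
      · exact lis_alternating_multiset cs (M i j) i j (cs.simple_mul_simple_pow i j)
          (cs.simple_mul_simple_pow' i j)
  | refl a => exact ⟨rfl, rfl⟩
  | symm _ ih => exact ⟨ih.1.symm, ih.2.symm⟩
  | trans _ _ ih1 ih2 => exact ⟨ih1.1.trans ih2.1, ih1.2.trans ih2.2⟩
  | mul _ _ ih1 ih2 =>
      rename_i w x y z _ _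
      rw [FreeMonoid.toList_mul, FreeMonoid.toList_mul]
      constructor
      · rw [cs.wordProd_append, cs.wordProd_append, ih1.1, ih2.1]
      · rw [lis_append cs, lis_append cs, ih1.1, ← Multiset.coe_add, ← Multiset.coe_add,
          ← Multiset.map_coe, ← Multiset.map_coe, ih1.2, ih2.2]
end

section
/- Let G be a group and let s, t ∈ G with s² = t² = 1. Write [a|b]_r for the alternating product a b a b ⋯ with r factors starting with a. Suppose [s|t]_m = [t|s]_m for some m ≥ 1. Then for every k with 1 ≤ k ≤ m, we have [s|t]_k · ([s|t]_{k-1})^{-1} = [t|s]_{m+1-k} · ([t|s]_{m-k})^{-1}. -/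
/-- The alternating product `a b a b ⋯` with `r` factors, starting with `a`. -/
def altProd {G : Type*} [Group G] (a b : G) : ℕ → G
  | 0 => 1
  | r + 1 => a * altProd b a r

lemma altProd_two {G : Type*} [Group G] (a b : G) (n : ℕ) :
    altProd a b (n + 2) = (a * b) * altProd a b n := by
  simp [altProd, mul_assoc]

lemma altProd_even {G : Type*} [Group G] (a b : G) (j : ℕ) :
    altProd a b (2 * j) = (a * b) ^ j := by
  induction j with
  | zero => simp [altProd]
  | succ n ih =>
      rw [show 2 * (n + 1) = 2 * n + 2 by ring, altProd_two, ih, pow_succ']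

lemma altProd_odd {G : Type*} [Group G] (a b : G) (j : ℕ) :
    altProd a b (2 * j + 1) = (a * b) ^ j * a := by
  induction j with
  | zero => simp [altProd]
  | succ n ih =>
      rw [show 2 * (n + 1) + 1 = (2 * n + 1) + 2 by ring, altProd_two, ih, pow_succ']
      group

lemma swap_pow {G : Type*} [Group G] (a b : G) (ha : a * a = 1) (hb : b * b = 1)
    (n : ℕ) : a * ((a * b) ^ n)⁻¹ = (a * b) ^ n * a := by
  have hainv : a⁻¹ = a := inv_eq_of_mul_eq_one_right ha
  have h : a * (a * b) * a⁻¹ = (a * b)⁻¹ := by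
    rw [mul_inv_rev, inv_eq_of_mul_eq_one_right ha, inv_eq_of_mul_eq_one_right hb,
      ← mul_assoc a a b, ha, one_mul]
  have key : a * (a * b) ^ n * a⁻¹ = ((a * b) ^ n)⁻¹ := by
    rw [← inv_pow, ← h, conj_pow]
  calc a * ((a * b) ^ n)⁻¹ = a * (a * (a * b) ^ n * a⁻¹) := by rw [key]
    _ = (a * a) * (a * b) ^ n * a⁻¹ := by group
    _ = (a * b) ^ n * a := by rw [ha, one_mul, hainv]

/-- The k-th left inversion of an alternating word of involutions. -/
lemma inv_formula {G : Type*} [Group G] (a b : G) (ha : a * a = 1) (hb : b * b = 1)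
    (k : ℕ) (hk : 1 ≤ k) :
    altProd a b k * (altProd a b (k - 1))⁻¹ = (a * b) ^ (k - 1) * a := by
  have hainv : a⁻¹ = a := inv_eq_of_mul_eq_one_right ha
  rcases Nat.even_or_odd k with ⟨j, hj⟩ | ⟨j, hj⟩
  · -- k even, k = 2i + 2
    obtain ⟨i, rfl⟩ : ∃ i, k = 2 * i + 2 := ⟨j - 1, by omega⟩
    rw [show 2 * i + 2 - 1 = 2 * i + 1 by omega,
      show 2 * i + 2 = 2 * (i + 1) by ring, altProd_even, altProd_odd, mul_inv_rev, hainv,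
      ← mul_assoc, mul_assoc _ a _, swap_pow a b ha hb, ← mul_assoc, ← pow_add]
    congr 2
    omega
  · -- k = 2j + 1
    subst hj
    rw [show 2 * j + 1 - 1 = 2 * j by omega, altProd_odd, altProd_even,
      mul_assoc, swap_pow a b ha hb, ← mul_assoc, ← pow_add]
    congr 2
    omega

lemma braid_pow {G : Type*} [Group G] (s t : G) (hs : s * s = 1) (ht : t * t = 1)
    (m : ℕ) (hbraid : altProd s t m = altProd t s m) : (s * t) ^ m = 1 := by
  have hsinv : s⁻¹ = s := inv_eq_of_mul_eq_one_right hs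
  have htinv : t⁻¹ = t := inv_eq_of_mul_eq_one_right ht
  have hst : (t * s : G) = (s * t)⁻¹ := by rw [mul_inv_rev, hsinv, htinv]
  rcases Nat.even_or_odd m with ⟨j, hj⟩ | ⟨j, hj⟩
  · have hm' : m = 2 * j := by omega
    subst hm'
    rw [altProd_even, altProd_even, hst, inv_pow] at hbraid
    rw [show 2 * j = j + j by ring, pow_add]
    nth_rewrite 2 [hbraid]
    exact mul_inv_cancel _
  · subst hj
    rw [altProd_odd, altProd_odd, hst, inv_pow] at hbraid
    have ht2 : (s * t) ^ (2 * j) * s = t := by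
      rw [show 2 * j = j + j by ring, pow_add, mul_assoc, hbraid, ← mul_assoc,
        mul_inv_cancel, one_mul]
    have h2j : (s * t) ^ (2 * j) = t * s := by
      calc (s * t) ^ (2 * j) = ((s * t) ^ (2 * j) * s) * s := by rw [mul_assoc, hs, mul_one]
        _ = t * s := by rw [ht2]
    calc (s * t) ^ (2 * j + 1) = (s * t) ^ (2 * j) * (s * t) := pow_succ _ _
      _ = (t * s) * (s * t) := by rw [h2j]
      _ = 1 := by rw [mul_assoc, ← mul_assoc s s t, hs, one_mul, ht]

/-- if `s, t` are involutions in a group `G` satisfying the braid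
relation `[s|t]_m = [t|s]_m`, then for all `1 ≤ k ≤ m`,
`[s|t]_k · ([s|t]_{k-1})⁻¹ = [t|s]_{m+1-k} · ([t|s]_{m-k})⁻¹`. -/
theorem alternating_inversion_symmetry {G : Type*} [Group G] (s t : G)
    (hs : s * s = 1) (ht : t * t = 1) (m : ℕ) (hm : 1 ≤ m)
    (hbraid : altProd s t m = altProd t s m) :
    ∀ k, 1 ≤ k → k ≤ m →
      altProd s t k * (altProd s t (k - 1))⁻¹
        = altProd t s (m + 1 - k) * (altProd t s (m - k))⁻¹ := by
  intro k hk1 hkm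
  have hsinv : s⁻¹ = s := inv_eq_of_mul_eq_one_right hs
  have htinv : t⁻¹ = t := inv_eq_of_mul_eq_one_right ht
  have hst : (t * s : G) = (s * t)⁻¹ := by rw [mul_inv_rev, hsinv, htinv]
  have hcm : (s * t) ^ m = 1 := braid_pow s t hs ht m hbraid
  obtain ⟨r, rfl⟩ : ∃ r, m = k + r := ⟨m - k, by omega⟩
  rw [show k + r + 1 - k = r + 1 by omega, show k + r - k = r by omega]
  have hR := inv_formula t s ht hs (r + 1) (by omega)
  simp only [Nat.add_sub_cancel] at hR
  rw [inv_formula s t hs ht k hk1, hR]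
  -- goal : (s*t)^(k-1) * s = (t*s)^r * t
  have hpow1 : (s * t) ^ (r + (k - 1)) = t * s := by
    have h1 : (s * t) ^ (r + (k - 1)) * (s * t) = 1 := by
      rw [← pow_succ, show r + (k - 1) + 1 = k + r by omega, hcm]
    rw [eq_inv_of_mul_eq_one_left h1, mul_inv_rev, hsinv, htinv]
  have key : (s * t) ^ r * ((s * t) ^ (k - 1) * s) = t := by
    rw [← mul_assoc, ← pow_add, hpow1, mul_assoc, hs, mul_one]
  symm
  calc (t * s) ^ r * t = ((s * t) ^ r)⁻¹ * t := by rw [hst, inv_pow]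
    _ = ((s * t) ^ r)⁻¹ * ((s * t) ^ r * ((s * t) ^ (k - 1) * s)) := by rw [key]
    _ = (s * t) ^ (k - 1) * s := by rw [← mul_assoc, inv_mul_cancel, one_mul]
end

section
/- Fix an integer m ≥ 3. Let A be an alphabet with 2m - 2 letters, consisting of symbols ℓ_1, ..., ℓ_m and r_2, ..., r_{m-1}, and set r_1 := ℓ_1 and r_m := ℓ_m. For each subset I ⊆ {1, ..., m} with 1 ∈ I and m ∉ I, writing I = {i_1 < i_2 < ⋯ < i_k} and {1,...,m} \setminus I = {j_1 < j_2 < ⋯ < j_p} (so j_p = m), define the unimodal word u_I := ℓ_{i_1} ℓ_{i_2} ⋯ ℓ_{i_k} r_{j_p} r_{j_{p-1}} ⋯ r_{j_1}, a word of length m over A. Then the map sending a pair (I, t), with I as above and 0 ≤ t < m, to the cyclic rotation of u_I by t positions is injective. Consequently, the set of all cyclic rotations of unimodal words has exactly m · 2^{m-2} elements. -/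
/-- The alphabet of `2m-2` letters `ℓ_1, …, ℓ_m, r_2, …, r_{m-1}` is modeled by
pairs `(i, b)` with `i ∈ {1, …, m}` (`b = false` for `ℓ_i`, `b = true` for
`r_i`), where the identifications `r_1 = ℓ_1` and `r_m = ℓ_m` are imposed by
the canonicalization map sending `(1, true) ↦ (1, false)` and
`(m, true) ↦ (m, false)`. -/
def canonLetter (m : ℕ) (p : ℕ × Bool) : ℕ × Bool :=
  if p.1 = 1 ∨ p.1 = m then (p.1, false) else p

/-- The unimodal word `u_I = ℓ_{i_1} ⋯ ℓ_{i_k} r_{j_p} ⋯ r_{j_1}`, where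
`I = {i_1 < ⋯ < i_k}` and `{1,…,m} \ I = {j_1 < ⋯ < j_p}`. -/
def unimodalWord (m : ℕ) (I : Finset ℕ) : List (ℕ × Bool) :=
  (I.sort (· ≤ ·)).map (fun i => (i, false)) ++
    (((Finset.Icc 1 m \ I).sort (· ≤ ·)).reverse).map (fun i => canonLetter m (i, true))

/-- The map sending a pair `(I, t)` (with `I ⊆ {1,…,m}`, `1 ∈ I`, `m ∉ I`,
`0 ≤ t < m`) to the cyclic rotation of the unimodal word `u_I` by `t`. -/
def rotatedUnimodal (m : ℕ)
    (p : {q : Finset ℕ × ℕ // q.1 ⊆ Finset.Icc 1 m ∧ 1 ∈ q.1 ∧ m ∉ q.1 ∧ q.2 < m}) :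
    List (ℕ × Bool) :=
  (unimodalWord m p.1.1).rotate p.1.2


lemma fst_map_unimodal (m : ℕ) (I : Finset ℕ) :
    (unimodalWord m I).map Prod.fst =
      I.sort (· ≤ ·) ++ ((Finset.Icc 1 m \ I).sort (· ≤ ·)).reverse := by
  simp only [unimodalWord, List.map_append, List.map_map, List.map_reverse]
  congr 1
  · exact (List.map_congr_left (fun i _ => rfl)).trans (List.map_id _)
  · congr 1
    refine (List.map_congr_left (fun i _ => ?_)).trans (List.map_id _)
    simp only [Function.comp_apply, canonLetter, id]
    split <;> rfl

lemma nodup_unimodal (m : ℕ) (I : Finset ℕ) : (unimodalWord m I).Nodup := by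
  apply List.Nodup.of_map Prod.fst
  rw [fst_map_unimodal]
  refine List.Nodup.append (Finset.sort_nodup _ _) (List.nodup_reverse.2 (Finset.sort_nodup _ _)) ?_
  intro i hi hi'
  rw [Finset.mem_sort] at hi
  rw [List.mem_reverse, Finset.mem_sort, Finset.mem_sdiff] at hi'
  exact hi'.2 hi

lemma length_unimodal (m : ℕ) (I : Finset ℕ) (hI : I ⊆ Finset.Icc 1 m) :
    (unimodalWord m I).length = m := by
  simp only [unimodalWord, List.length_append, List.length_map, List.length_reverse,
    Finset.length_sort, Finset.card_sdiff_of_subset hI]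
  have h1 : I.card ≤ (Finset.Icc 1 m).card := Finset.card_le_card hI
  have h2 : (Finset.Icc 1 m).card = m := by simp
  omega

lemma mem_unimodal_false (m : ℕ) (I : Finset ℕ)
    (h1 : 1 ∈ I) (hmI : m ∉ I) (hm : 1 ≤ m) (i : ℕ) :
    (i, false) ∈ unimodalWord m I ↔ i ∈ I ∨ i = m := by
  simp only [unimodalWord, List.mem_append, List.mem_map, Finset.mem_sort, List.mem_reverse,
    Finset.mem_sdiff, Finset.mem_Icc]
  constructor
  · rintro (⟨j, hj, he⟩ | ⟨j, hj, he⟩)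
    · exact Or.inl (by cases he; exact hj)
    · simp only [canonLetter] at he
      split at he
      · rcases Prod.mk.injEq .. ▸ he with ⟨rfl, -⟩
        rename_i hc
        rcases hc with rfl | rfl
        · exact absurd h1 hj.2
        · exact Or.inr rfl
      · exact absurd (congrArg Prod.snd he) (by simp)
  · rintro (hi | rfl)
    · exact Or.inl ⟨i, hi, rfl⟩
    · exact Or.inr ⟨_, ⟨⟨hm, le_refl _⟩, hmI⟩, by simp [canonLetter]⟩
/-- for `m ≥ 3`, the map `(I, t) ↦ rotate (u_I) t` is injective,
and consequently the set of all cyclic rotations of unimodal words has exactly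
`m · 2^(m-2)` elements. -/
theorem rotated_unimodal_injective_card (m : ℕ) (hm : 3 ≤ m) :
    Function.Injective (rotatedUnimodal m) ∧
      (Set.range (rotatedUnimodal m)).ncard = m * 2 ^ (m - 2) := by
  have hm1 : (1:ℕ) ≤ m := by omega
  have hinj : Function.Injective (rotatedUnimodal m) := by
    rintro ⟨⟨I, t⟩, hI, h1, hmI, ht⟩ ⟨⟨J, s⟩, hJ, h1', hmJ, hs⟩ h
    simp only [rotatedUnimodal] at h
    have hIJ : I = J := by
      ext i
      constructor
      · intro hi
        have hmem : (i, false) ∈ (unimodalWord m I).rotate t :=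
          (List.mem_rotate).2 ((mem_unimodal_false m I h1 hmI hm1 i).2 (Or.inl hi))
        rw [h, List.mem_rotate] at hmem
        rcases (mem_unimodal_false m J h1' hmJ hm1 i).1 hmem with hj | rfl
        · exact hj
        · exact absurd hi hmI
      · intro hi
        have hmem : (i, false) ∈ (unimodalWord m J).rotate s :=
          (List.mem_rotate).2 ((mem_unimodal_false m J h1' hmJ hm1 i).2 (Or.inl hi))
        rw [← h, List.mem_rotate] at hmem
        rcases (mem_unimodal_false m I h1 hmI hm1 i).1 hmem with hj | rfl
        · exact hj
        · exact absurd hi hmJ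
    subst hIJ
    have hne : unimodalWord m I ≠ [] := by
      intro hn
      have := length_unimodal m I hI
      rw [hn] at this
      simp at this
      omega
    have hmod := (nodup_unimodal m I).rotate_congr hne t s h
    rw [length_unimodal m I hI, Nat.mod_eq_of_lt ht, Nat.mod_eq_of_lt hs] at hmod
    subst hmod
    rfl
  refine ⟨hinj, ?_⟩
  have hr : Set.range (rotatedUnimodal m) = rotatedUnimodal m '' Set.univ :=
    Set.image_univ.symm
  rw [hr, Set.ncard_image_of_injective _ hinj, Set.ncard_univ]
  have e : {q : Finset ℕ × ℕ // q.1 ⊆ Finset.Icc 1 m ∧ 1 ∈ q.1 ∧ m ∉ q.1 ∧ q.2 < m} ≃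
      ((Finset.Icc 2 (m-1)).powerset : Finset (Finset ℕ)) × Fin m :=
    { toFun := fun q => (⟨q.1.1.erase 1, by
        rcases q with ⟨⟨I, t⟩, hI, h1, hmI, ht⟩
        rw [Finset.mem_powerset]
        intro i hi
        rw [Finset.mem_erase] at hi
        have := hI hi.2
        rw [Finset.mem_Icc] at this ⊢
        have : i ≠ m := fun he => hmI (he ▸ hi.2)
        have := hI hi.2
        rw [Finset.mem_Icc] at this
        omega⟩, ⟨q.1.2, q.2.2.2.2⟩)
      invFun := fun p => ⟨(insert 1 p.1.1, p.2.1), by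
        rcases p with ⟨⟨S, hS⟩, t⟩
        rw [Finset.mem_powerset] at hS
        refine ⟨?_, Finset.mem_insert_self _ _, ?_, t.isLt⟩
        · intro i hi
          rw [Finset.mem_insert] at hi
          rw [Finset.mem_Icc]
          rcases hi with rfl | hi
          · omega
          · have := hS hi; rw [Finset.mem_Icc] at this; omega
        · rw [Finset.mem_insert]
          rintro (h | h)
          · omega
          · have := hS h; rw [Finset.mem_Icc] at this; omega⟩
      left_inv := by
        rintro ⟨⟨I, t⟩, hI, h1, hmI, ht⟩
        apply Subtype.ext
        simp [Finset.insert_erase h1]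
      right_inv := by
        rintro ⟨⟨S, hS⟩, t⟩
        rw [Finset.mem_powerset] at hS
        have h1S : 1 ∉ S := by
          intro h
          have := hS h; rw [Finset.mem_Icc] at this; omega
        apply Prod.ext
        · apply Subtype.ext
          simp [Finset.erase_insert h1S]
        · rfl }
  rw [Nat.card_congr e, Nat.card_prod, Nat.card_eq_fintype_card, Nat.card_eq_fintype_card,
    Fintype.card_coe, Fintype.card_fin, Finset.card_powerset, Nat.card_Icc]
  have : m - 1 + 1 - 2 = m - 2 := by omega
  rw [this, mul_comm]
end

section
/- Let (W, S) be a Coxeter system, let B⁺(W) be the positive braid monoid presented by generators {𝐬 : s ∈ S} and the braid relations, and let lift : W → B⁺(W) be the map sending w to the element represented by any reduced word for w (well-defined by Matsumoto's theorem). Order B⁺(W) by the prefix order: 𝐮 ≤ 𝐯 iff there exists 𝐳 ∈ B⁺(W) with 𝐮·𝐳 = 𝐯. Then for all u, v ∈ W: u ≤ v in the right weak order on W (i.e. some reduced word for v has a reduced word for u as a prefix) if and only if lift(u) ≤ lift(v) in B⁺(W). In particular, lift is an order embedding of the weak order on W into the prefix order on B⁺(W). -/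
open CoxeterSystem

/-- The positive braid monoid `B⁺(W)` of a Coxeter matrix `M`. -/
abbrev BraidMonoid {B : Type*} (M : CoxeterMatrix B) :=
  (conGen (braidRel M)).Quotient

lemma braid_invariant {B W : Type*} [Group W] {M : CoxeterMatrix B}
    (cs : CoxeterSystem M W) {a b : FreeMonoid B}
    (h : conGen (braidRel M) a b) :
    (FreeMonoid.toList a).length = (FreeMonoid.toList b).length ∧
      cs.wordProd (FreeMonoid.toList a) = cs.wordProd (FreeMonoid.toList b) := by
  induction h with
  | of a b hab =>
      obtain ⟨i, j, hij, ha, hb⟩ := hab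
      subst ha hb
      constructor
      · simp [FreeMonoid.toList_ofList, length_alternatingWord]
      · have h := cs.wordProd_braidWord_eq i j
        rw [braidWord, braidWord, M.symmetric j i] at h
        simpa [FreeMonoid.toList_ofList] using h
  | refl => exact ⟨rfl, rfl⟩
  | symm _ ih => exact ⟨ih.1.symm, ih.2.symm⟩
  | trans _ _ ih1 ih2 => exact ⟨ih1.1.trans ih2.1, ih1.2.trans ih2.2⟩
  | mul _ _ ih1 ih2 =>
      constructor
      · simp [FreeMonoid.toList_mul, ih1.1, ih2.1]
      · simp [FreeMonoid.toList_mul, cs.wordProd_append, ih1.2, ih2.2]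

/-- the standard lift `lift : W → B⁺(W)` (sending `w` to the
positive braid represented by any reduced word for `w`) is an order embedding
of the right weak order on `W` into the prefix order on `B⁺(W)`: `u ≤ v` in
weak order (some reduced word for `v` has a reduced word for `u` as a prefix)
iff `lift u` is a prefix of `lift v` in `B⁺(W)`. -/
theorem lift_order_embedding {B W : Type*} [Group W] {M : CoxeterMatrix B}
    (cs : CoxeterSystem M W) (lift : W → BraidMonoid M)
    (hlift : ∀ l : List B, cs.IsReduced l →
      lift (cs.wordProd l) = Con.mk' (conGen (braidRel M)) (FreeMonoid.ofList l)) :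
    ∀ u v : W,
      (∃ l₁ l₂ : List B, cs.IsReduced (l₁ ++ l₂) ∧
          cs.wordProd l₁ = u ∧ cs.wordProd (l₁ ++ l₂) = v)
        ↔ ∃ z : BraidMonoid M, lift u * z = lift v := by
  intro u v
  constructor
  · rintro ⟨l₁, l₂, hred, rfl, rfl⟩
    have hred1 : cs.IsReduced l₁ := by
      have := CoxeterSystem.IsReduced.take hred l₁.length
      simpa using this
    refine ⟨Con.mk' (conGen (braidRel M)) (FreeMonoid.ofList l₂), ?_⟩
    rw [hlift l₁ hred1, hlift (l₁ ++ l₂) hred, ← MonoidHom.map_mul]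
    congr 1
  · rintro ⟨z, hz⟩
    obtain ⟨lu, hlu, hu⟩ := cs.exists_reduced_word' u
    obtain ⟨lv, hlv, hv⟩ := cs.exists_reduced_word' v
    obtain ⟨lz, rfl⟩ := Con.mk'_surjective z
    rw [hu, hv, hlift lu hlu, hlift lv hlv, ← MonoidHom.map_mul] at hz
    have hcon : conGen (braidRel M) (FreeMonoid.ofList lu * lz) (FreeMonoid.ofList lv) :=
      (Con.eq _).mp hz
    obtain ⟨hlen, hprod⟩ := braid_invariant cs hcon
    simp only [FreeMonoid.toList_mul, FreeMonoid.toList_ofList] at hlen hprod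
    refine ⟨lu, FreeMonoid.toList lz, ?_, hu.symm, ?_⟩
    · have hlv' : cs.length (cs.wordProd lv) = lv.length := hlv
      rw [CoxeterSystem.IsReduced, hprod, hlv', ← hlen]
    · rw [hprod, ← hv]
end
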